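/- There is a constant C > 0 such that for all N ∈ ℕ, all β ∈ [1/2, 1], and all ξ ∈ [−1/2, 1/2], one has |M̂_N^β(ξ) − M̂_{2N}^β(ξ)| ≤ C ( min{(N|ξ|)⁻¹, N|ξ|} + (1−β) N^{β−1} ) (with the convention that (N|ξ|)⁻¹ = ∞ when ξ = 0). -/

import Mathlib

open scoped BigOperators

/-- The multiplier `M̂_N^β(ξ) = (1/N) Σ_{n=1}^N ((n^β − (n−1)^β)/β) e^{2πi ξ n}`. -/
noncomputable def Mhat (β : ℝ) (N : ℕ) (ξ : ℝ) : ℂ :=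
  ((N : ℂ))⁻¹ * ∑ n ∈ Finset.Icc 1 N,
    (((((n : ℝ) ^ β - ((n : ℝ) - 1) ^ β) / β) : ℝ) : ℂ) *
      Complex.exp (2 * Real.pi * Complex.I * ξ * n)

open Real

lemma norm_exp_I_sub_one (θ : ℝ) :
    ‖Complex.exp ((θ : ℂ) * Complex.I) - 1‖ = 2 * |Real.sin (θ / 2)| := by
  have h2 : Complex.exp ((θ : ℂ) * Complex.I)
      = Complex.exp (((θ/2 : ℝ) : ℂ) * Complex.I) * Complex.exp (((θ/2 : ℝ) : ℂ) * Complex.I) := by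
    rw [← Complex.exp_add]; push_cast; ring_nf
  have h3 : (1 : ℂ) = Complex.exp (((θ/2 : ℝ) : ℂ) * Complex.I)
      * Complex.exp (-(((θ/2 : ℝ) : ℂ) * Complex.I)) := by
    rw [← Complex.exp_add]; simp
  have h4 : Complex.exp ((θ : ℂ) * Complex.I) - 1
      = Complex.exp (((θ/2 : ℝ) : ℂ) * Complex.I)
        * (Complex.exp (((θ/2 : ℝ) : ℂ) * Complex.I) - Complex.exp (-(((θ/2 : ℝ) : ℂ) * Complex.I))) := by
    rw [mul_sub, ← h2, ← h3]
  have h5 : Complex.exp (((θ/2 : ℝ) : ℂ) * Complex.I) - Complex.exp (-(((θ/2 : ℝ) : ℂ) * Complex.I))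
      = 2 * Complex.I * Complex.sin ((θ/2 : ℝ) : ℂ) := by
    rw [Complex.sin]
    field_simp
    ring_nf
    rw [Complex.I_sq]
    ring
  rw [h4, h5, norm_mul, Complex.norm_exp_ofReal_mul_I, one_mul]
  rw [show ((θ/2 : ℝ) : ℂ) = ((θ/2 : ℝ) : ℂ) from rfl]
  rw [← Complex.ofReal_sin, norm_mul, norm_mul, Complex.norm_two,
    Complex.norm_I, Complex.norm_real, Real.norm_eq_abs]
  ring

lemma sin_lower {ξ : ℝ} (hξ : |ξ| ≤ 1/2) : 2*|ξ| ≤ |Real.sin (π*ξ)| := by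
  have hpi : 0 < π := Real.pi_pos
  have h1 : |π*ξ| ≤ π/2 := by
    rw [abs_mul, abs_of_pos hpi]
    calc π * |ξ| ≤ π * (1/2) := by nlinarith
    _ = π/2 := by ring
  have := Real.mul_abs_le_abs_sin h1
  rw [abs_mul, abs_of_pos hpi] at this
  have h2 : 2/π * (π * |ξ|) = 2*|ξ| := by field_simp
  linarith [h2 ▸ this]

lemma key_geom {ξ : ℝ} (hξ0 : ξ ≠ 0) (hξ : |ξ| ≤ 1/2) (n : ℕ) :
    ‖∑ k ∈ Finset.range n, Complex.exp (2*(π:ℂ)*Complex.I*(ξ:ℂ))^k‖ ≤ 1/(2*|ξ|) := by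
  set z := Complex.exp (2*(π:ℂ)*Complex.I*(ξ:ℂ)) with hz
  have hzz : z = Complex.exp (((2*π*ξ : ℝ) : ℂ) * Complex.I) := by
    rw [hz]; congr 1; push_cast; ring
  have hsin : 2*|ξ| ≤ |Real.sin (π*ξ)| := sin_lower hξ
  have hlow : 4*|ξ| ≤ ‖z - 1‖ := by
    rw [hzz, norm_exp_I_sub_one]
    have h : (2*π*ξ)/2 = π*ξ := by ring
    rw [h]; linarith
  have habs : 0 < |ξ| := abs_pos.2 hξ0
  have hne : z ≠ 1 := by
    intro h; rw [h] at hlow; simp at hlow; linarith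
  rw [geom_sum_eq hne, norm_div]
  have h1 : ‖z^n - 1‖ ≤ 2 := by
    calc ‖z^n - 1‖ ≤ ‖z^n‖ + ‖(1:ℂ)‖ := norm_sub_le _ _
    _ ≤ 2 := by
        rw [norm_pow, hzz, Complex.norm_exp_ofReal_mul_I]; norm_num
  calc ‖z^n - 1‖ / ‖z - 1‖ ≤ 2 / (4*|ξ|) :=
        div_le_div₀ (by norm_num) h1 (by positivity) hlow
  _ = 1/(2*|ξ|) := by field_simp; ring

lemma key_E {ξ : ℝ} (hξ0 : ξ ≠ 0) (hξ : |ξ| ≤ 1/2) (m : ℕ) :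
    ‖∑ k ∈ Finset.Icc 1 m, Complex.exp (2*(π:ℂ)*Complex.I*(ξ:ℂ))^k‖ ≤ 1/(2*|ξ|) := by
  set z := Complex.exp (2*(π:ℂ)*Complex.I*(ξ:ℂ)) with hz
  have h1 : ∑ k ∈ Finset.Icc 1 m, z^k = z * ∑ k ∈ Finset.range m, z^k := by
    rw [← Finset.Ico_add_one_right_eq_Icc, Finset.sum_Ico_eq_sum_range]
    simp only [Nat.add_sub_cancel, pow_add, pow_one, Finset.mul_sum]
  rw [h1, norm_mul]
  have hz1 : ‖z‖ = 1 := by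
    rw [hz, show 2*(π:ℂ)*Complex.I*(ξ:ℂ) = ((2*π*ξ : ℝ) : ℂ) * Complex.I by push_cast; ring,
      Complex.norm_exp_ofReal_mul_I]
  rw [hz1, one_mul]
  exact key_geom hξ0 hξ m

lemma sum_a {β : ℝ} (hβ : 0 < β) (N : ℕ) :
    ∑ n ∈ Finset.Icc 1 N, (((n:ℝ)^β - ((n:ℝ)-1)^β)/β) = (N:ℝ)^β/β := by
  rw [← Finset.Ico_add_one_right_eq_Icc, Finset.sum_Ico_eq_sum_range, Nat.add_sub_cancel]
  have h : ∀ i : ℕ, ((((1+i:ℕ)):ℝ)^β - ((((1+i:ℕ)):ℝ)-1)^β)/β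
      = (fun j : ℕ => ((j:ℝ))^β/β) (i+1) - (fun j : ℕ => ((j:ℝ))^β/β) i := by
    intro i
    show ((((1+i:ℕ)):ℝ)^β - ((((1+i:ℕ)):ℝ)-1)^β)/β = (((i+1:ℕ)):ℝ)^β/β - ((i:ℝ))^β/β
    push_cast
    rw [sub_div]
    ring_nf
  rw [Finset.sum_congr rfl (fun i _ => h i), Finset.sum_range_sub (fun j : ℕ => ((j:ℝ))^β/β)]
  simp [Real.zero_rpow hβ.ne']

lemma a_step {β : ℝ} (hβ0 : 0 ≤ β) (hβ1 : β ≤ 1) {x : ℝ} (hx : 1 ≤ x) :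
    (x+1)^β - x^β ≤ x^β - (x-1)^β := by
  have hc := (Real.concaveOn_rpow hβ0 hβ1).2 (show x-1 ∈ Set.Ici (0:ℝ) by
      simp only [Set.mem_Ici]; linarith)
    (show x+1 ∈ Set.Ici (0:ℝ) by simp only [Set.mem_Ici]; linarith)
    (by norm_num : (0:ℝ) ≤ 1/2) (by norm_num : (0:ℝ) ≤ 1/2) (by norm_num)
  simp only [smul_eq_mul] at hc
  rw [show (1/2:ℝ) * (x-1) + 1/2 * (x+1) = x by ring] at hc
  linarith

lemma abel_bound {β : ℝ} (hβ : 1/2 ≤ β) {ξ : ℝ} (hβ1 : β ≤ 1) (hξ0 : ξ ≠ 0) (hξ : |ξ| ≤ 1/2)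
    {N : ℕ} (hN : 1 ≤ N) :
    ‖∑ n ∈ Finset.Icc 1 N, (((((n:ℝ)^β - ((n:ℝ)-1)^β)/β : ℝ)) : ℂ)
      * Complex.exp (2*(π:ℂ)*Complex.I*(ξ:ℂ))^n‖ ≤ 1/|ξ| := by
  have hβ0 : (0:ℝ) < β := by linarith
  set a : ℕ → ℝ := fun n => (((n:ℝ)^β - ((n:ℝ)-1)^β)/β) with ha
  set z : ℂ := Complex.exp (2*(π:ℂ)*Complex.I*(ξ:ℂ)) with hz
  set D : ℝ := 1/(2*|ξ|) with hD
  have habs : 0 < |ξ| := abs_pos.2 hξ0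
  have hDPos : 0 < D := by positivity
  have ha_nonneg : ∀ n : ℕ, 1 ≤ n → 0 ≤ a n := by
    intro n hn
    have h1 : (1:ℝ) ≤ (n:ℝ) := by exact_mod_cast hn
    apply div_nonneg _ hβ0.le
    have := Real.rpow_le_rpow (by linarith : (0:ℝ) ≤ (n:ℝ)-1) (by linarith : (n:ℝ)-1 ≤ n) hβ0.le
    linarith
  have ha_anti : ∀ n : ℕ, 1 ≤ n → a (n+1) ≤ a n := by
    intro n hn
    have h1 : (1:ℝ) ≤ (n:ℝ) := by exact_mod_cast hn
    have hstep := a_step hβ0.le hβ1 h1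
    rw [ha]
    simp only
    rw [div_le_div_iff₀ hβ0 hβ0]
    push_cast
    rw [show ((n:ℝ)+1-1) = (n:ℝ) by ring]
    nlinarith
  have ha1 : a 1 = 1/β := by
    rw [ha]; simp [Real.zero_rpow hβ0.ne', Real.one_rpow]
  have ha1le : a 1 ≤ 2 := by rw [ha1]; rw [div_le_iff₀ hβ0]; linarith
  -- rewrite the sum over Icc as sum over range
  have hrw : ∑ n ∈ Finset.Icc 1 N, ((a n : ℝ) : ℂ) * z^n
      = ∑ i ∈ Finset.range N, ((a (i+1) : ℝ) : ℂ) • z^(i+1) := by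
    rw [← Finset.Ico_add_one_right_eq_Icc, Finset.sum_Ico_eq_sum_range, Nat.add_sub_cancel]
    exact Finset.sum_congr rfl fun i _ => by rw [smul_eq_mul, add_comm 1 i]
  have hG : ∀ m : ℕ, ‖∑ i ∈ Finset.range m, z^(i+1)‖ ≤ D := by
    intro m
    have h1 : ∑ i ∈ Finset.range m, z^(i+1) = ∑ k ∈ Finset.Icc 1 m, z^k := by
      rw [← Finset.Ico_add_one_right_eq_Icc, Finset.sum_Ico_eq_sum_range, Nat.add_sub_cancel]
      exact Finset.sum_congr rfl fun i _ => by rw [add_comm 1 i]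
    rw [h1]
    exact key_E hξ0 hξ m
  rw [hrw, Finset.sum_range_by_parts (fun i => ((a (i+1) : ℝ) : ℂ)) (fun i => z^(i+1)) N]
  have hN1 : N - 1 + 1 = N := Nat.succ_pred_eq_of_pos hN
  have hfN : ‖((a (N-1+1) : ℝ) : ℂ) • ∑ i ∈ Finset.range N, z^(i+1)‖ ≤ a N * D := by
    rw [norm_smul, hN1, Complex.norm_real, Real.norm_eq_abs, abs_of_nonneg (ha_nonneg N hN)]
    exact mul_le_mul_of_nonneg_left (hG N) (ha_nonneg N hN)
  have hterm : ∀ i ∈ Finset.range (N-1),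
      ‖(((a (i+1+1) : ℝ) : ℂ) - ((a (i+1) : ℝ) : ℂ)) • ∑ j ∈ Finset.range (i+1), z^(j+1)‖
        ≤ (a (i+1) - a (i+2)) * D := by
    intro i _
    rw [norm_smul]
    have h1 : (((a (i+1+1) : ℝ) : ℂ) - ((a (i+1) : ℝ) : ℂ)) = ((a (i+2) - a (i+1) : ℝ) : ℂ) := by
      push_cast; ring
    rw [h1, Complex.norm_real, Real.norm_eq_abs,
      abs_of_nonpos (by linarith [ha_anti (i+1) (Nat.le_add_left 1 i)]), neg_sub]
    exact mul_le_mul_of_nonneg_left (hG (i+1)) (by linarith [ha_anti (i+1) (Nat.le_add_left 1 i)])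
  calc ‖((a (N-1+1) : ℝ) : ℂ) • ∑ i ∈ Finset.range N, z^(i+1)
        - ∑ i ∈ Finset.range (N-1), (((a (i+1+1) : ℝ) : ℂ) - ((a (i+1) : ℝ) : ℂ))
            • ∑ j ∈ Finset.range (i+1), z^(j+1)‖
      ≤ a N * D + ∑ i ∈ Finset.range (N-1), (a (i+1) - a (i+2)) * D := by
        refine (norm_sub_le _ _).trans (add_le_add hfN ?_)
        exact (norm_sum_le _ _).trans (Finset.sum_le_sum hterm)
    _ = a N * D + (a 1 - a N) * D := by
        rw [← Finset.sum_mul]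
        congr 2
        have := Finset.sum_range_sub' (fun i => a (i+1)) (N-1)
        simpa [hN1] using this
    _ ≤ 2 * D := by nlinarith [ha_nonneg N hN]
    _ = 1/|ξ| := by rw [hD]; field_simp

lemma Mhat_norm_le {β : ℝ} (hβ : 1/2 ≤ β) (hβ1 : β ≤ 1) {ξ : ℝ} (hξ0 : ξ ≠ 0)
    (hξ : |ξ| ≤ 1/2) {N : ℕ} (hN : 1 ≤ N) :
    ‖Mhat β N ξ‖ ≤ ((N:ℝ))⁻¹ * (1/|ξ|) := by
  have hrw : ∀ n : ℕ, Complex.exp (2*(π:ℂ)*Complex.I*(ξ:ℂ)*(n:ℂ))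
      = Complex.exp (2*(π:ℂ)*Complex.I*(ξ:ℂ))^n := by
    intro n; rw [← Complex.exp_nat_mul]; congr 1; ring
  rw [Mhat, norm_mul]
  have h1 : ‖((N:ℂ))⁻¹‖ = ((N:ℝ))⁻¹ := by
    rw [norm_inv, Complex.norm_natCast]
  rw [h1]
  refine mul_le_mul_of_nonneg_left ?_ (by positivity)
  have h2 : ∑ n ∈ Finset.Icc 1 N,
      (((((n : ℝ) ^ β - ((n : ℝ) - 1) ^ β) / β) : ℝ) : ℂ) * Complex.exp (2 * Real.pi * Complex.I * ξ * n)
      = ∑ n ∈ Finset.Icc 1 N,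
      (((((n : ℝ) ^ β - ((n : ℝ) - 1) ^ β) / β) : ℝ) : ℂ) * Complex.exp (2*(π:ℂ)*Complex.I*(ξ:ℂ))^n := by
    exact Finset.sum_congr rfl fun n _ => by rw [← hrw n]
  rw [h2]
  exact abel_bound hβ hβ1 hξ0 hξ hN

lemma small_bound {β : ℝ} (hβ : 1/2 ≤ β) (hβ1 : β ≤ 1) (ξ : ℝ) {N : ℕ} (hN : 1 ≤ N) :
    ‖Mhat β N ξ - ((N:ℂ))⁻¹ * ((((N:ℝ)^β/β : ℝ)) : ℂ)‖ ≤ 4*π*((N:ℝ) * |ξ|) := by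
  have hβ0 : (0:ℝ) < β := by linarith
  have hN0 : (0:ℝ) < (N:ℝ) := by exact_mod_cast hN
  have hc : ((((N:ℝ)^β/β : ℝ)) : ℂ)
      = ∑ n ∈ Finset.Icc 1 N, (((((n:ℝ)^β - ((n:ℝ)-1)^β)/β : ℝ)) : ℂ) := by
    rw [← sum_a hβ0 N, Complex.ofReal_sum]
  rw [Mhat, hc, ← mul_sub, ← Finset.sum_sub_distrib, norm_mul, norm_inv, Complex.norm_natCast]
  have hterm : ∀ n ∈ Finset.Icc 1 N,
      ‖(((((n:ℝ)^β - ((n:ℝ)-1)^β)/β : ℝ)) : ℂ) * Complex.exp (2 * Real.pi * Complex.I * ξ * n)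
          - (((((n:ℝ)^β - ((n:ℝ)-1)^β)/β : ℝ)) : ℂ)‖
        ≤ (((n:ℝ)^β - ((n:ℝ)-1)^β)/β) * (2*π*(|ξ| * (N:ℝ))) := by
    intro n hn
    obtain ⟨hn1, hn2⟩ := Finset.mem_Icc.1 hn
    have h1 : (1:ℝ) ≤ (n:ℝ) := by exact_mod_cast hn1
    have hnn : (n:ℝ) ≤ (N:ℝ) := by exact_mod_cast hn2
    have hannn : 0 ≤ (((n:ℝ)^β - ((n:ℝ)-1)^β)/β) := by
      apply div_nonneg _ hβ0.le
      have := Real.rpow_le_rpow (by linarith : (0:ℝ) ≤ (n:ℝ)-1) (by linarith : (n:ℝ)-1 ≤ n) hβ0.le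
      linarith
    have h2 : (((((n:ℝ)^β - ((n:ℝ)-1)^β)/β : ℝ)) : ℂ) * Complex.exp (2 * Real.pi * Complex.I * ξ * n)
          - (((((n:ℝ)^β - ((n:ℝ)-1)^β)/β : ℝ)) : ℂ)
        = (((((n:ℝ)^β - ((n:ℝ)-1)^β)/β : ℝ)) : ℂ)
          * (Complex.exp (2 * Real.pi * Complex.I * ξ * n) - 1) := by ring
    rw [h2, norm_mul, Complex.norm_real ((((n:ℝ)^β - ((n:ℝ)-1)^β)/β : ℝ)),
      Real.norm_eq_abs, abs_of_nonneg hannn]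
    refine mul_le_mul_of_nonneg_left ?_ hannn
    have h3 : (2 : ℂ) * Real.pi * Complex.I * ξ * n = (((2*π*ξ*n : ℝ)) : ℂ) * Complex.I := by
      push_cast; ring
    rw [h3, norm_exp_I_sub_one, show (2*π*ξ*(n:ℝ))/2 = π*ξ*(n:ℝ) by ring]
    have h4 : |Real.sin (π*ξ*(n:ℝ))| ≤ |π*ξ*(n:ℝ)| := Real.abs_sin_le_abs
    have h5 : |π*ξ*(n:ℝ)| = π * |ξ| * (n:ℝ) := by
      rw [abs_mul, abs_mul, abs_of_pos Real.pi_pos, Nat.abs_cast]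
    have hpi : (0:ℝ) < π := Real.pi_pos
    have hxa : (0:ℝ) ≤ |ξ| := abs_nonneg ξ
    have f2 : π * |ξ| * (n:ℝ) ≤ π * |ξ| * (N:ℝ) :=
      mul_le_mul_of_nonneg_left hnn (by positivity)
    linarith
  calc ((N:ℝ))⁻¹ * ‖∑ n ∈ Finset.Icc 1 N,
        ((((((n:ℝ)^β - ((n:ℝ)-1)^β)/β : ℝ)) : ℂ) * Complex.exp (2 * Real.pi * Complex.I * ξ * n)
          - (((((n:ℝ)^β - ((n:ℝ)-1)^β)/β : ℝ)) : ℂ))‖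
      ≤ ((N:ℝ))⁻¹ * ∑ n ∈ Finset.Icc 1 N, (((n:ℝ)^β - ((n:ℝ)-1)^β)/β) * (2*π*(|ξ| * (N:ℝ))) := by
        refine mul_le_mul_of_nonneg_left ?_ (by positivity)
        exact (norm_sum_le _ _).trans (Finset.sum_le_sum hterm)
    _ = ((N:ℝ))⁻¹ * ((N:ℝ)^β/β * (2*π*(|ξ| * (N:ℝ)))) := by rw [← Finset.sum_mul, sum_a hβ0]
    _ ≤ 4*π*((N:ℝ) * |ξ|) := by
        have hNβ : (N:ℝ)^β ≤ (N:ℝ) := by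
          have h6 : (N:ℝ)^β ≤ (N:ℝ)^(1:ℝ) :=
            Real.rpow_le_rpow_of_exponent_le (by exact_mod_cast hN) hβ1
          rwa [Real.rpow_one] at h6
        have hNβ0 : 0 < (N:ℝ)^β := Real.rpow_pos_of_pos hN0 β
        have hpi : (0:ℝ) < π := Real.pi_pos
        have hxa : (0:ℝ) ≤ |ξ| := abs_nonneg ξ
        rw [inv_mul_le_iff₀ hN0, div_mul_eq_mul_div, div_le_iff₀ hβ0]
        have e1 : (N:ℝ)^β * (2*π*(|ξ| * (N:ℝ))) ≤ (N:ℝ) * (2*π*(|ξ| * (N:ℝ))) :=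
          mul_le_mul_of_nonneg_right hNβ (by positivity)
        have e2 : 0 ≤ (β - 1/2) * (4*π*((N:ℝ) * |ξ|)*(N:ℝ)) :=
          mul_nonneg (by linarith) (by positivity)
        nlinarith [e1, e2]

lemma center_diff {β : ℝ} (hβ : 1/2 ≤ β) (hβ1 : β ≤ 1) {N : ℕ} (hN : 1 ≤ N) :
    ‖((N:ℂ))⁻¹ * ((((N:ℝ)^β/β : ℝ)) : ℂ) - (((2*N:ℕ):ℂ))⁻¹ * (((((2*N:ℕ):ℝ)^β/β : ℝ)) : ℂ)‖
      ≤ 2 * ((1-β) * (N:ℝ)^(β-1)) := by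
  have hβ0 : (0:ℝ) < β := by linarith
  have hN0 : (0:ℝ) < (N:ℝ) := by exact_mod_cast hN
  have h2N : ((2*N:ℕ):ℝ) = 2*(N:ℝ) := by push_cast; ring
  have hkey : ((N:ℂ))⁻¹ * ((((N:ℝ)^β/β : ℝ)) : ℂ) - (((2*N:ℕ):ℂ))⁻¹ * (((((2*N:ℕ):ℝ)^β/β : ℝ)) : ℂ)
      = ((((N:ℝ))⁻¹ * ((N:ℝ)^β/β) - (((2*N:ℕ):ℝ))⁻¹ * (((2*N:ℕ):ℝ)^β/β) : ℝ) : ℂ) := by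
    push_cast; ring
  rw [hkey, Complex.norm_real, Real.norm_eq_abs]
  have hx : ((N:ℝ))⁻¹ * ((N:ℝ)^β/β) = (N:ℝ)^(β-1)/β := by
    rw [Real.rpow_sub_one hN0.ne']; ring
  have hy : (((2*N:ℕ):ℝ))⁻¹ * (((2*N:ℕ):ℝ)^β/β) = (2:ℝ)^(β-1) * (N:ℝ)^(β-1)/β := by
    rw [h2N]
    rw [show ((2:ℝ)*(N:ℝ))⁻¹ * ((2*(N:ℝ))^β/β) = (2*(N:ℝ))^(β-1)/β by
      rw [Real.rpow_sub_one (by positivity)]; ring]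
    rw [Real.mul_rpow (by norm_num) hN0.le]
  rw [hx, hy]
  have hpow : 0 < (N:ℝ)^(β-1) := Real.rpow_pos_of_pos hN0 _
  have h21 : (2:ℝ)^(β-1) ≤ 1 :=
    Real.rpow_le_one_of_one_le_of_nonpos (by norm_num) (by linarith)
  have hlog : 1 - (2:ℝ)^(β-1) ≤ (1-β) := by
    have he : (2:ℝ)^(β-1) = Real.exp (Real.log 2 * (β-1)) :=
      Real.rpow_def_of_pos (by norm_num) _
    have hle := Real.add_one_le_exp (Real.log 2 * (β-1))
    have hlog2 : Real.log 2 ≤ 1 := by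
      have := Real.log_le_sub_one_of_pos (by norm_num : (0:ℝ) < 2); linarith
    have hlog2' : 0 < Real.log 2 := Real.log_pos (by norm_num)
    rw [he]
    nlinarith
  have hdiff : (N:ℝ)^(β-1)/β - (2:ℝ)^(β-1) * (N:ℝ)^(β-1)/β
      = (N:ℝ)^(β-1) * (1 - (2:ℝ)^(β-1))/β := by ring
  rw [hdiff, abs_of_nonneg (div_nonneg (mul_nonneg hpow.le (by linarith)) hβ0.le)]
  rw [div_le_iff₀ hβ0]
  nlinarith [mul_le_mul_of_nonneg_left hlog hpow.le,
    mul_nonneg (mul_nonneg hpow.le (by linarith : (0:ℝ) ≤ 1-β)) (by linarith : (0:ℝ) ≤ 2*β-1)]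

/-- `|M̂_N^β(ξ) − M̂_{2N}^β(ξ)| ≤ C (min{(N|ξ|)⁻¹, N|ξ|} + (1−β) N^{β−1})` uniformly in
`N ∈ ℕ`, `β ∈ [1/2, 1]` and `ξ ∈ [−1/2, 1/2]`.  (When `ξ = 0` both `(N|ξ|)⁻¹ = 0⁻¹ = 0`
and `N|ξ| = 0` in Lean, so the minimum equals `N|ξ| = 0`, which agrees with the
convention `(N|ξ|)⁻¹ = ∞` for `ξ = 0`.) -/
theorem stmt_10 :
    ∃ C : ℝ, 0 < C ∧
      ∀ (N : ℕ), 1 ≤ N →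
        ∀ (β : ℝ), 1 / 2 ≤ β → β ≤ 1 →
          ∀ (ξ : ℝ), ξ ∈ Set.Icc (-(1 / 2) : ℝ) (1 / 2) →
            ‖Mhat β N ξ - Mhat β (2 * N) ξ‖ ≤
              C * (min (((N : ℝ) * |ξ|)⁻¹) ((N : ℝ) * |ξ|) + (1 - β) * (N : ℝ) ^ (β - 1)) := by
  refine ⟨100, by norm_num, ?_⟩
  intro N hN β hβ hβ1 ξ hξmem
  obtain ⟨hξl, hξr⟩ := hξmem
  have hξabs : |ξ| ≤ 1/2 := abs_le.2 ⟨by linarith, by linarith⟩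
  have hN0 : (0:ℝ) < (N:ℝ) := by exact_mod_cast hN
  have h2N : 1 ≤ 2*N := by omega
  have hpow : 0 < (N:ℝ)^(β-1) := Real.rpow_pos_of_pos hN0 _
  have hu : 0 ≤ (1-β) * (N:ℝ)^(β-1) := mul_nonneg (by linarith) hpow.le
  have hxa : (0:ℝ) ≤ |ξ| := abs_nonneg ξ
  have hpi4 : π ≤ 4 := Real.pi_le_four
  have hpi0 : (0:ℝ) < π := Real.pi_pos
  set c1 : ℂ := ((N:ℂ))⁻¹ * ((((N:ℝ)^β/β : ℝ)) : ℂ) with hc1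
  set c2 : ℂ := (((2*N:ℕ):ℂ))⁻¹ * (((((2*N:ℕ):ℝ)^β/β : ℝ)) : ℂ) with hc2
  rcases le_or_gt ((N:ℝ) * |ξ|) 1 with hsmall | hbig
  · have hmin : min (((N:ℝ) * |ξ|)⁻¹) ((N:ℝ) * |ξ|) = (N:ℝ) * |ξ| := by
      rcases eq_or_ne ξ 0 with h0 | h0
      · simp [h0]
      · have ht : 0 < (N:ℝ) * |ξ| := mul_pos hN0 (abs_pos.2 h0)
        refine min_eq_right ?_
        nlinarith [mul_inv_cancel₀ ht.ne', inv_pos.2 ht]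
    rw [hmin]
    have b1 := small_bound hβ hβ1 ξ hN
    have b2 := small_bound hβ hβ1 ξ h2N
    have b3 := center_diff hβ hβ1 hN
    have tri : ‖Mhat β N ξ - Mhat β (2*N) ξ‖
        ≤ ‖Mhat β N ξ - c1‖ + ‖c1 - c2‖ + ‖c2 - Mhat β (2*N) ξ‖ := by
      calc ‖Mhat β N ξ - Mhat β (2*N) ξ‖
          = ‖(Mhat β N ξ - c1) + (c1 - c2) + (c2 - Mhat β (2*N) ξ)‖ := by ring_nf
        _ ≤ ‖(Mhat β N ξ - c1) + (c1 - c2)‖ + ‖c2 - Mhat β (2*N) ξ‖ := norm_add_le _ _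
        _ ≤ ‖Mhat β N ξ - c1‖ + ‖c1 - c2‖ + ‖c2 - Mhat β (2*N) ξ‖ := by
            exact add_le_add (norm_add_le _ _) le_rfl
    have hrev : ‖c2 - Mhat β (2*N) ξ‖ = ‖Mhat β (2*N) ξ - c2‖ := norm_sub_rev _ _
    have hmul : π * ((N:ℝ) * |ξ|) ≤ 4 * ((N:ℝ) * |ξ|) :=
      mul_le_mul_of_nonneg_right hpi4 (by positivity)
    rw [hrev] at tri
    calc ‖Mhat β N ξ - Mhat β (2*N) ξ‖
        ≤ ‖Mhat β N ξ - c1‖ + ‖c1 - c2‖ + ‖Mhat β (2*N) ξ - c2‖ := tri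
      _ ≤ 4*π*((N:ℝ) * |ξ|) + 2*((1-β) * (N:ℝ)^(β-1)) + 4*π*(((2*N:ℕ):ℝ) * |ξ|) := by
          exact add_le_add (add_le_add b1 b3) b2
      _ ≤ 100 * ((N:ℝ) * |ξ| + (1-β) * (N:ℝ)^(β-1)) := by
          rw [show ((2*N:ℕ):ℝ) = 2*(N:ℝ) by push_cast; ring]
          nlinarith [hmul]
  · have h0 : ξ ≠ 0 := by
      intro h; rw [h] at hbig; simp at hbig; linarith
    have ht : 0 < (N:ℝ) * |ξ| := mul_pos hN0 (abs_pos.2 h0)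
    have hmin : min (((N:ℝ) * |ξ|)⁻¹) ((N:ℝ) * |ξ|) = ((N:ℝ) * |ξ|)⁻¹ := by
      refine min_eq_left ?_
      nlinarith [mul_inv_cancel₀ ht.ne', inv_pos.2 ht]
    rw [hmin]
    have m1 := Mhat_norm_le hβ hβ1 h0 hξabs hN
    have m2 := Mhat_norm_le hβ hβ1 h0 hξabs h2N
    have e1 : ((N:ℝ))⁻¹ * (1/|ξ|) = ((N:ℝ) * |ξ|)⁻¹ := by
      rw [mul_inv]; ring
    have e2 : (((2*N:ℕ):ℝ))⁻¹ * (1/|ξ|) ≤ ((N:ℝ) * |ξ|)⁻¹ := by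
      rw [← e1]
      have : (((2*N:ℕ):ℝ))⁻¹ ≤ ((N:ℝ))⁻¹ := by
        rw [show ((2*N:ℕ):ℝ) = 2*(N:ℝ) by push_cast; ring]
        rw [inv_le_inv₀ (by positivity) hN0]
        linarith
      exact mul_le_mul_of_nonneg_right this (by positivity)
    have hinv : 0 < ((N:ℝ) * |ξ|)⁻¹ := inv_pos.2 ht
    calc ‖Mhat β N ξ - Mhat β (2*N) ξ‖
        ≤ ‖Mhat β N ξ‖ + ‖Mhat β (2*N) ξ‖ := norm_sub_le _ _
      _ ≤ ((N:ℝ) * |ξ|)⁻¹ + ((N:ℝ) * |ξ|)⁻¹ := add_le_add (e1 ▸ m1) (m2.trans e2)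
      _ ≤ 100 * (((N:ℝ) * |ξ|)⁻¹ + (1-β) * (N:ℝ)^(β-1)) := by linarith
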